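/- Let z ∈ F_ℤ be not FPF-Grassmannian, let (q,r) be the lexicographically maximal FPF-visible inversion of z, and let y = η_FPF(z) = (q,r) z (q,r). Then: (a) the maximal visible descent of I(z) is q or q+1; (b) every visible descent of I(y) is at most q; (c) I(y) and I(z) have the same minimal visible descent, and it is at most q − 1. -/

import Mathlib

open Equiv

noncomputable section

/-- The function underlying the permutation `Θ : i ↦ i - (-1)^i` of `ℤ`. -/
def thetaFun (i : ℤ) : ℤ := if Even i then i - 1 else i + 1

theorem thetaFun_invol : Function.Involutive thetaFun := by
  intro i
  unfold thetaFun
  by_cases h : Even i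
  · have h1 : ¬ Even (i - 1) := by simp [Int.even_sub_one, h]
    simp [h, h1]
  · have h1 : Even (i + 1) := Int.even_add_one.mpr h
    simp [h, h1]

/-- The permutation `Θ` of `ℤ`, interchanging `2k-1` and `2k` for every integer `k`. -/
def Theta : Equiv.Perm ℤ := thetaFun_invol.toPerm

/-- `F_ℤ`: the fixed-point-free involutions of `ℤ` agreeing with `Θ` outside a finite set. -/
def FZ : Set (Equiv.Perm ℤ) :=
  {z | z * z = 1 ∧ (∀ i : ℤ, z i ≠ i) ∧ {i : ℤ | z i ≠ Theta i}.Finite}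

/-- `(i,j)` is an FPF-visible inversion of `z`: `i < j` and `z(j) < min{i, z(i)}`. -/
def FpfVisInv (z : Equiv.Perm ℤ) (i j : ℤ) : Prop := i < j ∧ z j < min i (z i)

/-- `i` is an FPF-visible descent of `z`. -/
def FpfVisDes (z : Equiv.Perm ℤ) (i : ℤ) : Prop := FpfVisInv z i (i + 1)

/-- `i` is a visible descent of an involution `f` of `ℤ`: `f(i+1) ≤ min{i, f(i)}`. -/
def VisDes (f : ℤ → ℤ) (i : ℤ) : Prop := f (i + 1) ≤ min i (f i)

/-- `(q,r)` is the lexicographically maximal FPF-visible inversion of `z`. -/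
def IsMaxVisInv (z : Equiv.Perm ℤ) (q r : ℤ) : Prop :=
  FpfVisInv z q r ∧ ∀ a b : ℤ, FpfVisInv z a b → a < q ∨ (a = q ∧ b ≤ r)

open Classical in
/-- The involution `I(z)` of `ℤ` (as a function): its nontrivial cycles are exactly the
pairs `(p,q) ∈ Cyc_ℤ(z)` for which there exists `(a,b) ∈ Cyc_ℤ(z)` with `p < b < q`. -/
def Imap (z : Equiv.Perm ℤ) (i : ℤ) : ℤ :=
  if ∃ a b : ℤ, a < b ∧ z a = b ∧ min i (z i) < b ∧ b < max i (z i) then z i else i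

/-- `f` is the involution `(φ₀, n+1)(φ₁, n+2)⋯(φ_{r-1}, n+r)` of `ℤ`, where
`φ₀ < φ₁ < ⋯ < φ_{r-1} ≤ n` and `r ≥ 1`. -/
def IsIGrassWith (f : ℤ → ℤ) (n : ℤ) (r : ℕ) (φ : ℕ → ℤ) : Prop :=
  1 ≤ r ∧
  (∀ i j : ℕ, i < j → j < r → φ i < φ j) ∧
  (∀ i : ℕ, i < r → φ i ≤ n) ∧
  (∀ i : ℕ, i < r → f (φ i) = n + (i : ℤ) + 1 ∧ f (n + (i : ℤ) + 1) = φ i) ∧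
  (∀ x : ℤ, (∀ i : ℕ, i < r → x ≠ φ i ∧ x ≠ n + (i : ℤ) + 1) → f x = x)

/-- `f` is I-Grassmannian: the identity, or `(φ₁, n+1)⋯(φ_r, n+r)` as above. -/
def IsIGrassFn (f : ℤ → ℤ) : Prop := f = id ∨ ∃ n r φ, IsIGrassWith f n r φ

/-- `z ∈ F_ℤ` is FPF-Grassmannian if `I(z)` is I-Grassmannian. -/
def IsFPFGrass (z : Equiv.Perm ℤ) : Prop := IsIGrassFn (Imap z)

def Cr (z : Equiv.Perm ℤ) (i : ℤ) : Prop :=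
  ∃ a b : ℤ, a < b ∧ z a = b ∧ min i (z i) < b ∧ b < max i (z i)

lemma Imap_pos {z : Equiv.Perm ℤ} {i : ℤ} (h : Cr z i) : Imap z i = z i := by
  unfold Imap; exact if_pos h

lemma Imap_neg {z : Equiv.Perm ℤ} {i : ℤ} (h : ¬ Cr z i) : Imap z i = i := by
  unfold Imap; exact if_neg h

lemma cr_of_top {z : Equiv.Perm ℤ} (hinv : ∀ i, z (z i) = i) {i b : ℤ}
    (hb : z b < b) (h1 : min i (z i) < b) (h2 : b < max i (z i)) : Cr z i :=
  ⟨z b, b, hb, hinv b, h1, h2⟩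

lemma top_of_cr {z : Equiv.Perm ℤ} (hinv : ∀ i, z (z i) = i) {i : ℤ} (h : Cr z i) :
    ∃ b, z b < b ∧ min i (z i) < b ∧ b < max i (z i) := by
  obtain ⟨a, b, h1, h2, h3, h4⟩ := h
  refine ⟨b, ?_, h3, h4⟩
  have : z b = a := by rw [← h2, hinv]
  omega

lemma imap_lt_iff {z : Equiv.Perm ℤ} (b : ℤ) :
    Imap z b < b ↔ (z b < b ∧ Cr z b) := by
  by_cases h : Cr z b
  · rw [Imap_pos h]; tauto
  · rw [Imap_neg h]; simp [h]

/-- FACT: minimal visible descent of a map is (least "top") - 1. -/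
lemma isLeast_visDes {v : ℤ → ℤ} {β : ℤ} (h : IsLeast {b : ℤ | v b < b} β) :
    IsLeast {i : ℤ | VisDes v i} (β - 1) := by
  obtain ⟨hβ, hlb⟩ := h
  constructor
  · show v (β - 1 + 1) ≤ min (β - 1) (v (β - 1))
    have h1 : ¬ (v (β - 1) < β - 1) := fun hc => by have := hlb hc; omega
    simp only [Set.mem_setOf_eq] at hβ
    have : β - 1 + 1 = β := by ring
    rw [this, le_min_iff]
    omega
  · intro i hi
    have h2 : v (i + 1) ≤ min i (v i) := hi
    have h3 : min i (v i) ≤ i := min_le_left _ _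
    have h4 : v (i + 1) < i + 1 := by omega
    have := hlb h4
    omega

-- characterization of visible descents of Imap
lemma visDes_Imap_iff {z : Equiv.Perm ℤ} (hinv : ∀ i, z (z i) = i) (hfpf : ∀ i, z i ≠ i) (i : ℤ) :
    VisDes (Imap z) i ↔ (z (i+1) < i ∧ Cr z (i+1) ∧ (Cr z i → z (i+1) < z i)) := by
  have hne1 : z (i+1) ≠ i + 1 := hfpf _
  have hinj : z (i+1) = z i → False := fun h => by
    have := z.injective h; omega
  constructor
  · intro hd
    have hd' : Imap z (i+1) ≤ min i (Imap z i) := hd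
    have hcr1 : Cr z (i+1) := by
      by_contra hc
      rw [Imap_neg hc] at hd'
      have := min_le_left i (Imap z i)
      omega
    rw [Imap_pos hcr1] at hd'
    have hle : z (i+1) ≤ i := le_trans hd' (min_le_left _ _)
    have hnei : z (i+1) ≠ i := by
      intro he
      -- cycle (i, i+1): no integer strictly between
      obtain ⟨b, hb1, hb2, hb3⟩ := top_of_cr hinv hcr1
      rw [he] at hb2 hb3
      have : min (i+1) i = i := by omega
      have h2 : max (i+1) i = i + 1 := by omega
      rw [this] at hb2; rw [h2] at hb3; omega
    refine ⟨by omega, hcr1, fun hcri => ?_⟩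
    rw [Imap_pos hcri] at hd'
    have := min_le_right i (z i)
    have h5 : z (i+1) ≤ z i := le_trans hd' (min_le_right _ _)
    rcases lt_or_eq_of_le h5 with h | h
    · exact h
    · exact absurd h hinj
  · rintro ⟨h1, h2, h3⟩
    show Imap z (i+1) ≤ min i (Imap z i)
    rw [Imap_pos h2]
    rw [le_min_iff]
    by_cases hcri : Cr z i
    · rw [Imap_pos hcri]
      have := h3 hcri
      omega
    · rw [Imap_neg hcri]; omega

/-- helpers for least/greatest of finite nonempty sets of integers -/
lemma exists_isLeast_int {s : Set ℤ} (hfin : s.Finite) (hne : s.Nonempty) :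
    ∃ m, IsLeast s m := by
  classical
  have hb : BddBelow s := hfin.bddBelow
  obtain ⟨b, hb⟩ := hb
  obtain ⟨lb, h1, h2⟩ := Int.exists_least_of_bdd (P := fun x => x ∈ s) ⟨b, fun x hx => hb hx⟩ hne
  exact ⟨lb, h1, h2⟩

lemma exists_isGreatest_int {s : Set ℤ} (hfin : s.Finite) (hne : s.Nonempty) :
    ∃ m, IsGreatest s m := by
  classical
  have hb : BddAbove s := hfin.bddAbove
  obtain ⟨b, hb⟩ := hb
  obtain ⟨ub, h1, h2⟩ := Int.exists_greatest_of_bdd (P := fun x => x ∈ s) ⟨b, fun x hx => hb hx⟩ hne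
  exact ⟨ub, h1, h2⟩

lemma grass_of_unique_descent (v : ℤ → ℤ) (hv : ∀ i, v (v i) = i)
    (hfin : {b : ℤ | v b < b}.Finite) (hne : {b : ℤ | v b < b}.Nonempty)
    (n : ℤ) (hd : VisDes v n) (huniq : ∀ i, VisDes v i → i = n) :
    ∃ r φ, IsIGrassWith v n r φ := by
  have hinj : ∀ a b, v a = v b → a = b := fun a b h => by
    have := congrArg v h; rwa [hv, hv] at this
  obtain ⟨β, hβ⟩ := exists_isLeast_int hfin hne
  obtain ⟨M, hM⟩ := exists_isGreatest_int hfin hne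
  have hβn : β = n + 1 := by
    have := huniq _ (isLeast_visDes hβ).1
    omega
  -- single downward step
  have step : ∀ b, v b < b → n + 1 < b → v (b-1) < b - 1 := by
    intro b hb hnb
    by_contra hc
    have hdes : VisDes v (b-1) := by
      show v (b - 1 + 1) ≤ min (b-1) (v (b-1))
      have e : b - 1 + 1 = b := by ring
      rw [e, le_min_iff]
      omega
    have := huniq _ hdes
    omega
  have htops : ∀ b, b ≤ M → n + 1 ≤ b → v b < b := by
    intro b hbM
    refine Int.le_induction_down (motive := fun b _ => n + 1 ≤ b → v b < b) ?_ ?_ b hbM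
    · intro _; exact hM.1
    · intro m _ ih hm
      have h1 : v m < m := ih (by omega)
      exact step m h1 (by omega)
  have hT : ∀ b, v b < b ↔ (n + 1 ≤ b ∧ b ≤ M) := by
    intro b
    constructor
    · intro h
      have h1 := hβ.2 h
      have h2 := hM.2 h
      exact ⟨by omega, h2⟩
    · intro ⟨h1, h2⟩; exact htops b h2 h1
  have hMn : n + 1 ≤ M := by
    have := hβ.1
    have := hM.2 this
    omega
  refine ⟨(M - n).toNat, fun k => v (n + k + 1), ?_, ?_, ?_, ?_, ?_⟩
  · omega
  -- monotone
  · have hbot : ∀ k : ℕ, (k : ℤ) < M - n → v (n + k + 1) ≤ n := by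
      intro k hk
      have hb : v (n + k + 1) < n + k + 1 := (hT _).2 ⟨by omega, by omega⟩
      have hnt : ¬ (v (v (n + k + 1)) < v (n + k + 1)) := by rw [hv]; omega
      rw [hT] at hnt
      push_neg at hnt
      rcases le_or_gt (n+1) (v (n + k + 1)) with h | h
      · have := hnt h; omega
      · omega
    have hadj : ∀ k : ℕ, (k : ℤ) < M - n → v (n + k + 1) < v (n + (k+1) + 1) := by
      intro k hk
      by_contra hc
      have hne2 : v (n + (k:ℤ) + 1 + 1) ≠ v (n + k + 1) := by
        intro h; have := hinj _ _ h; omega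
      have e : n + (k:ℤ) + 1 + 1 = n + ((k:ℕ)+1 : ℕ) + 1 := by push_cast; ring
      have hlt : v (n + (k:ℤ) + 1 + 1) < v (n + k + 1) := by
        rw [e]; rcases lt_or_eq_of_le (not_lt.mp hc) with h | h
        · exact h
        · exact absurd (hinj _ _ h) (by push_cast; omega)
      have hdes : VisDes v (n + k + 1) := by
        show v (n + (k:ℤ) + 1 + 1) ≤ min (n + (k:ℤ) + 1) (v (n + (k:ℤ) + 1))
        have h1 := hbot k (by omega)
        rw [le_min_iff]
        omega
      have := huniq _ hdes
      omega
    have hmono : ∀ j i : ℕ, i < j → (j : ℤ) ≤ M - n → v (n + i + 1) < v (n + j + 1) := by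
      intro j
      induction j with
      | zero => intro i h; omega
      | succ j ih =>
        intro i hij hjr
        have hstep : v (n + (j:ℤ) + 1) < v (n + ((j+1 : ℕ) : ℤ) + 1) := by
          have := hadj j (by push_cast at hjr ⊢; omega)
          exact_mod_cast this
        rcases Nat.lt_succ_iff_lt_or_eq.mp hij with h | h
        · exact lt_trans (ih i h (by push_cast at hjr ⊢; omega)) hstep
        · subst h; exact hstep
    intro i j hij hjr
    show v (n + i + 1) < v (n + j + 1)
    exact hmono j i hij (by omega)
  -- bottoms ≤ n
  · intro k hk
    show v (n + k + 1) ≤ n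
    have hk' : (k : ℤ) < M - n := by omega
    have hb : v (n + k + 1) < n + k + 1 := (hT _).2 ⟨by omega, by omega⟩
    have hnt : ¬ (v (v (n + k + 1)) < v (n + k + 1)) := by rw [hv]; omega
    rw [hT] at hnt
    push_neg at hnt
    rcases le_or_gt (n+1) (v (n + k + 1)) with h | h
    · have := hnt h; omega
    · omega
  -- pairs
  · intro k _
    exact ⟨hv _, rfl⟩
  -- fixed points
  · intro x hx
    rcases lt_trichotomy (v x) x with h | h | h
    · exfalso
      have h1 := (hT x).1 h
      have hi : ((x - n - 1).toNat : ℤ) = x - n - 1 := Int.toNat_of_nonneg (by omega)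
      have hir : (x - n - 1).toNat < (M - n).toNat := by omega
      have := (hx _ hir).2
      omega
    · exact h
    · exfalso
      have h1 : v (v x) < v x := by rw [hv]; omega
      have h2 := (hT _).1 h1
      have hi : ((v x - n - 1).toNat : ℤ) = v x - n - 1 := Int.toNat_of_nonneg (by omega)
      have hir : (v x - n - 1).toNat < (M - n).toNat := by omega
      have := (hx _ hir).1
      apply this
      have e : v x = n + ((v x - n - 1).toNat : ℤ) + 1 := by omega
      have := congrArg v e
      rwa [hv] at this

lemma b2 {z : Equiv.Perm ℤ} {q r : ℤ} (hqr : IsMaxVisInv z q r) :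
    ∀ a b : ℤ, q < a → a < b → ¬ (z b < min a (z a)) := by
  intro a b h1 h2 h3
  rcases hqr.2 a b ⟨h2, h3⟩ with h | h <;> omega

lemma b3 {z : Equiv.Perm ℤ} {q r : ℤ} (hqr : IsMaxVisInv z q r) :
    ∀ b : ℤ, r < b → ¬ (z b < min q (z q)) := by
  intro b h1 h2
  rcases hqr.2 q b ⟨by have := hqr.1.1; omega, h2⟩ with h | h <;> omega

lemma b5 {z : Equiv.Perm ℤ} {q r : ℤ} (hqr : IsMaxVisInv z q r) :
    z (q+1) < q ∧ z (q+1) < z q := by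
  obtain ⟨⟨hlt, hm⟩, hM⟩ := hqr
  rw [lt_min_iff] at hm
  rcases eq_or_lt_of_le (by omega : q + 1 ≤ r) with h | h
  · rw [h]; exact hm
  · have hne : z (q+1) ≠ z r := fun hh => by have := z.injective hh; omega
    have hlt2 : z (q+1) < z r := by
      by_contra hc
      have h5 : z r < z (q+1) := by omega
      rcases hM _ _ ⟨h, by rw [lt_min_iff]; exact ⟨by omega, h5⟩⟩ with hh | hh <;> omega
    constructor <;> omega

lemma b7 {z : Equiv.Perm ℤ} {q r : ℤ} (hinv : ∀ i, z (z i) = i)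
    (hqr : IsMaxVisInv z q r) (h : q < z q) : r < z q := by
  obtain ⟨⟨hlt, hm⟩, hM⟩ := hqr
  rw [lt_min_iff] at hm
  have hne : z q ≠ r := by
    intro hh
    have : z r = q := by rw [← hh, hinv]
    omega
  by_contra hc
  have hvi : FpfVisInv z (z q) r := by
    refine ⟨by omega, ?_⟩
    rw [lt_min_iff, hinv]
    exact ⟨hm.2, hm.1⟩
  rcases hM _ _ hvi with hh | hh <;> omega

lemma b8 {z : Equiv.Perm ℤ} {q r : ℤ} (hqr : IsMaxVisInv z q r) :
    ∀ k, q < k → k < r → z k < z r := by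
  intro k h1 h2
  by_contra hc
  have hne : z k ≠ z r := fun hh => by have := z.injective hh; omega
  have hzr := (lt_min_iff.mp hqr.1.2).1
  have hvi : FpfVisInv z k r := ⟨h2, by rw [lt_min_iff]; exact ⟨by omega, by omega⟩⟩
  rcases hqr.2 _ _ hvi with h | h <;> omega

lemma aU_gen {w : Equiv.Perm ℤ} {q : ℤ} (hinv : ∀ i, w (w i) = i) (hfpf : ∀ i, w i ≠ i)
    (hB2 : ∀ a b : ℤ, q < a → a < b → ¬ (w b < min a (w a))) :
    ∀ i, q + 2 ≤ i → ¬ VisDes (Imap w) i := by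
  intro i hi hD
  rw [visDes_Imap_iff hinv hfpf] at hD
  obtain ⟨h1, h2, h3⟩ := hD
  have hnd := hB2 i (i+1) (by omega) (by omega)
  rw [lt_min_iff] at hnd
  push_neg at hnd
  have h4 : w i ≤ w (i+1) := hnd h1
  have h4' : w i ≠ w (i+1) := fun hh => by have := w.injective hh; omega
  have hcri : ¬ Cr w i := fun hc => by have := h3 hc; omega
  have h6 : w i < i - 1 := by omega
  have h7 : i + 1 ≤ w (i-1) := by
    by_contra hc
    push_neg at hc
    have hne1 : w (i-1) ≠ i - 1 := hfpf _
    have hne2 : w (i-1) ≠ i := fun hh => by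
      have h8 := congrArg w hh
      rw [hinv] at h8
      omega
    refine hcri (cr_of_top hinv (b := i - 1) (by omega) ?_ ?_)
    · have := min_le_right i (w i); omega
    · have := le_max_left i (w i); omega
  rcases lt_or_eq_of_le (by omega : w (i+1) ≤ i - 1) with hc | hc
  · exact hB2 (i-1) (i+1) (by omega) (by omega)
      (by rw [lt_min_iff]; exact ⟨by omega, by omega⟩)
  · exact hB2 (i-1) i (by omega) (by omega)
      (by rw [lt_min_iff]; exact ⟨by omega, by omega⟩)

lemma aE {z : Equiv.Perm ℤ} {q r : ℤ} (hinv : ∀ i, z (z i) = i) (hfpf : ∀ i, z i ≠ i)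
    (hqr : IsMaxVisInv z q r) :
    VisDes (Imap z) q ∨ VisDes (Imap z) (q+1) := by
  have hb5 := b5 hqr
  have hB2 := b2 hqr
  by_cases hc : Cr z (q+1)
  · left
    rw [visDes_Imap_iff hinv hfpf]
    exact ⟨hb5.1, hc, fun _ => hb5.2⟩
  · right
    have hzq : q < z q := by
      by_contra hcc
      push_neg at hcc
      have h1 : z q < q := lt_of_le_of_ne hcc (hfpf q)
      refine hc (cr_of_top hinv (b := q) h1 ?_ ?_)
      · have := min_le_right (q+1) (z (q+1)); omega
      · have := le_max_left (q+1) (z (q+1)); omega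
    have hrzq : r < z q := b7 hinv hqr hzq
    have hqr1 : q < r := hqr.1.1
    have hA : z (q+2) ≤ q := by
      by_contra hcc
      push_neg at hcc
      have hne1 : z (q+2) ≠ q + 1 := fun hh => by
        have : z (q+1) = q + 2 := by rw [← hh, hinv]
        omega
      have hne2 : z (q+2) ≠ q + 2 := hfpf _
      have hzq3 : q + 3 ≤ z q := by
        have h1 : q + 2 ≤ z q := by omega
        rcases eq_or_lt_of_le h1 with hh | hh
        · exfalso
          have : z (q+2) = q := by rw [hh, hinv]
          omega
        · omega
      exact hB2 (q+2) (z q) (by omega) (by omega)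
        (by rw [hinv, lt_min_iff]; exact ⟨by omega, by omega⟩)
    have hB' : z (q+1) < z (q+2) := by
      by_contra hcc
      push_neg at hcc
      have hne : z (q+2) ≠ z (q+1) := fun hh => by have := z.injective hh; omega
      exact hB2 (q+1) (q+2) (by omega) (by omega)
        (by rw [lt_min_iff]; exact ⟨by omega, by omega⟩)
    have hBcr : Cr z (q+2) := by
      refine cr_of_top hinv (b := q+1) (by omega) ?_ ?_
      · have := min_le_right (q+2) (z (q+2)); omega
      · have := le_max_left (q+2) (z (q+2)); omega
    rw [visDes_Imap_iff hinv hfpf]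
    have e : q + 1 + 1 = q + 2 := by ring
    rw [e]
    exact ⟨by omega, hBcr, fun hcc => absurd hcc hc⟩

lemma excl {z : Equiv.Perm ℤ} {q r : ℤ} (hinv : ∀ i, z (z i) = i) (hfpf : ∀ i, z i ≠ i)
    (hqr : IsMaxVisInv z q r) :
    ¬ (VisDes (Imap z) q ∧ VisDes (Imap z) (q+1)) := by
  rintro ⟨h1, h2⟩
  rw [visDes_Imap_iff hinv hfpf] at h1 h2
  simp only [show q + 1 + 1 = q + 2 from by ring] at h2
  have h3 := h2.2.2 h1.2.1
  exact b2 hqr (q+1) (q+2) (by omega) (by omega)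
    (by rw [lt_min_iff]; exact ⟨by omega, by omega⟩)

section yside

variable {z y : Equiv.Perm ℤ} {q r : ℤ}

lemma y_apply (hy : y = Equiv.swap q r * z * Equiv.swap q r) (k : ℤ) :
    y k = Equiv.swap q r (z (Equiv.swap q r k)) := by
  rw [hy]; rfl

lemma y_inv (hy : y = Equiv.swap q r * z * Equiv.swap q r) (hinv : ∀ i, z (z i) = i) :
    ∀ i, y (y i) = i := by
  intro i
  rw [y_apply hy, y_apply hy, Equiv.swap_apply_self, hinv, Equiv.swap_apply_self]

lemma y_fpf (hy : y = Equiv.swap q r * z * Equiv.swap q r) (hfpf : ∀ i, z i ≠ i) :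
    ∀ i, y i ≠ i := by
  intro i hh
  rw [y_apply hy] at hh
  have h2 := congrArg (Equiv.swap q r) hh
  rw [Equiv.swap_apply_self] at h2
  exact hfpf _ h2

lemma y_q (hy : y = Equiv.swap q r * z * Equiv.swap q r) (h1 : z r ≠ q) (h2 : z r ≠ r) :
    y q = z r := by
  rw [y_apply hy, Equiv.swap_apply_left, Equiv.swap_apply_of_ne_of_ne h1 h2]

lemma y_r (hy : y = Equiv.swap q r * z * Equiv.swap q r) (h1 : z q ≠ q) (h2 : z q ≠ r) :
    y r = z q := by
  rw [y_apply hy, Equiv.swap_apply_right, Equiv.swap_apply_of_ne_of_ne h1 h2]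

lemma y_c (hy : y = Equiv.swap q r * z * Equiv.swap q r) (hinv : ∀ i, z (z i) = i)
    (h1 : z r ≠ q) (h2 : z r ≠ r) : y (z r) = q := by
  rw [y_apply hy, Equiv.swap_apply_of_ne_of_ne h1 h2, hinv, Equiv.swap_apply_right]

lemma y_zq (hy : y = Equiv.swap q r * z * Equiv.swap q r) (hinv : ∀ i, z (z i) = i)
    (h1 : z q ≠ q) (h2 : z q ≠ r) : y (z q) = r := by
  rw [y_apply hy, Equiv.swap_apply_of_ne_of_ne h1 h2, hinv, Equiv.swap_apply_left]

lemma y_gen (hy : y = Equiv.swap q r * z * Equiv.swap q r) (hinv : ∀ i, z (z i) = i) (k : ℤ)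
    (h1 : k ≠ q) (h2 : k ≠ r) (h3 : k ≠ z q) (h4 : k ≠ z r) : y k = z k := by
  have h3' : z k ≠ q := fun hh => h3 (by have := congrArg z hh; rw [hinv] at this; omega)
  have h4' : z k ≠ r := fun hh => h4 (by have := congrArg z hh; rw [hinv] at this; omega)
  rw [y_apply hy, Equiv.swap_apply_of_ne_of_ne h1 h2, Equiv.swap_apply_of_ne_of_ne h3' h4']

/-- `y` has no visible inversion with first coordinate above `q`. -/
lemma by2 (hinv : ∀ i, z (z i) = i) (hfpf : ∀ i, z i ≠ i)
    (hqr : IsMaxVisInv z q r) (hy : y = Equiv.swap q r * z * Equiv.swap q r) :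
    ∀ a b : ℤ, q < a → a < b → ¬ (y b < min a (y a)) := by
  have hc1 : z r < q := (lt_min_iff.mp hqr.1.2).1
  have hc2 : z r < z q := (lt_min_iff.mp hqr.1.2).2
  have hqltr : q < r := hqr.1.1
  have hzrr : z r ≠ r := hfpf r
  have hzrq : z r ≠ q := by omega
  have hzqq : z q ≠ q := hfpf q
  have hzqr : z q ≠ r := fun hh => by have := congrArg z hh; rw [hinv] at this; omega
  have hb7 : q < z q → r < z q := b7 hinv hqr
  intro a b ha hab H
  rw [lt_min_iff] at H
  obtain ⟨H1, H2⟩ := H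
  by_cases hbr : b = r
  · rw [hbr] at H1 H2 hab
    have hazq : a ≠ z q := by
      by_cases h : q < z q
      · have := hb7 h; omega
      · have : z q < q := lt_of_le_of_ne (not_lt.mp h) hzqq
        omega
    have hya : y a = z a :=
      y_gen hy hinv a (by omega) (by omega) hazq (by omega)
    have hyb : y r = z q := y_r hy hzqq hzqr
    rw [hyb] at H1 H2
    rw [hya] at H2
    exact b2 hqr a r ha hab (by rw [lt_min_iff]; exact ⟨by omega, by omega⟩)
  · by_cases hbzq : b = z q
    · subst hbzq
      have hzqgt : q < z q := by omega
      have hrzq := hb7 hzqgt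
      have hyb : y (z q) = r := y_zq hy hinv hzqq hzqr
      rw [hyb] at H1 H2
      have hya : y a = z a :=
        y_gen hy hinv a (by omega) (by omega) (by omega) (by omega)
      rw [hya] at H2
      refine b2 hqr a (z q) ha hab ?_
      rw [hinv, lt_min_iff]
      exact ⟨by omega, by omega⟩
    · have hyb : y b = z b :=
        y_gen hy hinv b (by omega) (by omega) hbzq (by omega)
      rw [hyb] at H1 H2
      by_cases har : a = r
      · rw [har] at H2 hab ha
        have hya : y r = z q := y_r hy hzqq hzqr
        rw [hya] at H2
        by_cases hzq : z q < q
        · exact b3 hqr b (by omega) (by rw [lt_min_iff]; exact ⟨by omega, H2⟩)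
        · push_neg at hzq
          have hzqgt : q < z q := lt_of_le_of_ne hzq (Ne.symm hzqq)
          have hrzq := hb7 hzqgt
          rcases lt_trichotomy (z b) q with h | h | h
          · exact b3 hqr b (by omega) (by rw [lt_min_iff]; exact ⟨h, by omega⟩)
          · exact hbzq (by have := congrArg z h; rw [hinv] at this; omega)
          · have h9 := b8 hqr (z b) h (by omega)
            rw [hinv] at h9
            omega
      · by_cases hazq2 : a = z q
        · subst hazq2
          have hzqgt : q < z q := by omega
          have hrzq := hb7 hzqgt
          have hya : y (z q) = r := y_zq hy hinv hzqq hzqr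
          rw [hya] at H2
          rcases lt_trichotomy (z b) q with h | h | h
          · exact b3 hqr b (by omega) (by rw [lt_min_iff]; exact ⟨h, by omega⟩)
          · exact hbzq (by have := congrArg z h; rw [hinv] at this; omega)
          · have h9 := b8 hqr (z b) h (by omega)
            rw [hinv] at h9
            omega
        · have hya : y a = z a :=
            y_gen hy hinv a (by omega) (by omega) hazq2 (by omega)
          rw [hya] at H2
          exact b2 hqr a b ha hab (by rw [lt_min_iff]; exact ⟨H1, H2⟩)

/-- Part (b): every visible descent of `I(y)` is at most `q`. -/
lemma partB (hinv : ∀ i, z (z i) = i) (hfpf : ∀ i, z i ≠ i)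
    (hqr : IsMaxVisInv z q r) (hy : y = Equiv.swap q r * z * Equiv.swap q r) :
    ∀ d, VisDes (Imap y) d → d ≤ q := by
  have hyinv := y_inv hy hinv
  have hyfpf := y_fpf hy hfpf
  have hB2 := by2 hinv hfpf hqr hy
  have hc1 : z r < q := (lt_min_iff.mp hqr.1.2).1
  have hzrr : z r ≠ r := hfpf r
  have hzrq : z r ≠ q := by omega
  intro i hD
  by_contra hcc
  push_neg at hcc
  rcases (by omega : i = q + 1 ∨ q + 2 ≤ i) with hiq | hiq
  · subst hiq
    rw [visDes_Imap_iff hyinv hyfpf] at hD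
    simp only [show q + 1 + 1 = q + 2 from by ring] at hD
    obtain ⟨h1, h2, h3⟩ := hD
    have hnd := hB2 (q+1) (q+2) (by omega) (by omega)
    rw [lt_min_iff] at hnd
    push_neg at hnd
    have h4 : y (q+1) ≤ y (q+2) := hnd h1
    have h4' : y (q+1) ≠ y (q+2) := fun hh => by have := y.injective hh; omega
    have hcry : ¬ Cr y (q+1) := fun hc => by have := h3 hc; omega
    have hyq : y q = z r := y_q hy hzrq hzrr
    refine hcry (cr_of_top hyinv (b := q) (by rw [hyq]; omega) ?_ ?_)
    · have := min_le_right (q+1) (y (q+1)); omega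
    · have := le_max_left (q+1) (y (q+1)); omega
  · exact aU_gen hyinv hyfpf hB2 i hiq hD

/-- tops below `q` agree between `z` and `y`. -/
lemma top_transfer (hinv : ∀ i, z (z i) = i) (hfpf : ∀ i, z i ≠ i)
    (hqr : IsMaxVisInv z q r) (hy : y = Equiv.swap q r * z * Equiv.swap q r) :
    ∀ x, x < q → (z x < x ∨ y x < x) → y x = z x := by
  have hc1 : z r < q := (lt_min_iff.mp hqr.1.2).1
  have hc2 : z r < z q := (lt_min_iff.mp hqr.1.2).2
  have hqltr : q < r := hqr.1.1
  have hzrr : z r ≠ r := hfpf r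
  have hzrq : z r ≠ q := by omega
  have hzqq : z q ≠ q := hfpf q
  have hzqr : z q ≠ r := fun hh => by have := congrArg z hh; rw [hinv] at this; omega
  intro x hx htop
  have hxzq : x ≠ z q := by
    intro hh
    subst hh
    have h1 : z (z q) = q := hinv q
    rcases htop with h | h
    · omega
    · rw [y_zq hy hinv hzqq hzqr] at h; omega
  have hxzr : x ≠ z r := by
    intro hh
    subst hh
    have h1 : z (z r) = r := hinv r
    rcases htop with h | h
    · omega
    · rw [y_c hy hinv hzrq hzrr] at h; omega
  exact y_gen hy hinv x (by omega) (by omega) hxzq hxzr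

/-- crossed tops strictly below `q` agree between `z` and `y`. -/
lemma ct_below (hinv : ∀ i, z (z i) = i) (hfpf : ∀ i, z i ≠ i)
    (hqr : IsMaxVisInv z q r) (hy : y = Equiv.swap q r * z * Equiv.swap q r) :
    ∀ b, b < q → ((z b < b ∧ Cr z b) ↔ (y b < b ∧ Cr y b)) := by
  have hyinv := y_inv hy hinv
  intro b hb
  constructor
  · rintro ⟨h1, h2⟩
    have hyb : y b = z b := top_transfer hinv hfpf hqr hy b hb (Or.inl h1)
    obtain ⟨x, hx1, hx2, hx3⟩ := top_of_cr hinv h2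
    rw [min_eq_right (le_of_lt h1)] at hx2
    rw [max_eq_left (le_of_lt h1)] at hx3
    have hxy : y x = z x := top_transfer hinv hfpf hqr hy x (by omega) (Or.inl hx1)
    refine ⟨by omega, cr_of_top hyinv (b := x) (by omega) ?_ ?_⟩
    · rw [hyb, min_eq_right (le_of_lt h1)]
      omega
    · rw [hyb, max_eq_left (le_of_lt h1)]
      omega
  · rintro ⟨h1, h2⟩
    have hyb : y b = z b := top_transfer hinv hfpf hqr hy b hb (Or.inr h1)
    obtain ⟨x, hx1, hx2, hx3⟩ := top_of_cr hyinv h2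
    rw [min_eq_right (le_of_lt h1)] at hx2
    rw [max_eq_left (le_of_lt h1)] at hx3
    have hxy : y x = z x := top_transfer hinv hfpf hqr hy x (by omega) (Or.inr hx1)
    refine ⟨by omega, cr_of_top hinv (b := x) (by omega) ?_ ?_⟩
    · rw [min_eq_right (by omega : z b ≤ b)]
      omega
    · rw [max_eq_left (by omega : z b ≤ b)]
      omega

/-- a crossed top of `z` at `q` gives a crossed top of `y` at `q`. -/
lemma ct_at_q (hinv : ∀ i, z (z i) = i) (hfpf : ∀ i, z i ≠ i)
    (hqr : IsMaxVisInv z q r) (hy : y = Equiv.swap q r * z * Equiv.swap q r) :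
    (z q < q ∧ Cr z q) → (y q < q ∧ Cr y q) := by
  have hyinv := y_inv hy hinv
  have hc1 : z r < q := (lt_min_iff.mp hqr.1.2).1
  have hc2 : z r < z q := (lt_min_iff.mp hqr.1.2).2
  have hzrr : z r ≠ r := hfpf r
  have hzrq : z r ≠ q := by omega
  rintro ⟨h1, h2⟩
  have hyq : y q = z r := y_q hy hzrq hzrr
  obtain ⟨x, hx1, hx2, hx3⟩ := top_of_cr hinv h2
  rw [min_eq_right (le_of_lt h1)] at hx2
  rw [max_eq_left (le_of_lt h1)] at hx3
  have hxy : y x = z x := top_transfer hinv hfpf hqr hy x (by omega) (Or.inl hx1)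
  refine ⟨by omega, cr_of_top hyinv (b := x) (by omega) ?_ ?_⟩
  · rw [hyq, min_eq_right (by omega : z r ≤ q)]
    omega
  · rw [hyq, max_eq_left (by omega : z r ≤ q)]
    omega

end yside

/-- crossed tops deviate from Theta. -/
lemma tops_subset {z : Equiv.Perm ℤ} (hinv : ∀ i, z (z i) = i) :
    {b : ℤ | Imap z b < b} ⊆ {i : ℤ | z i ≠ Theta i} := by
  intro b hb
  rw [Set.mem_setOf_eq, imap_lt_iff] at hb
  obtain ⟨h1, h2⟩ := hb
  intro he
  have hth : Theta b = thetaFun b := rfl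
  rw [hth] at he
  unfold thetaFun at he
  by_cases hev : Even b
  · rw [if_pos hev] at he
    obtain ⟨x, hx1, hx2, hx3⟩ := top_of_cr hinv h2
    rw [min_eq_right (le_of_lt h1)] at hx2
    rw [max_eq_left (le_of_lt h1)] at hx3
    omega
  · rw [if_neg hev] at he
    omega

lemma imap_invol {z : Equiv.Perm ℤ} (hinv : ∀ i, z (z i) = i) :
    ∀ i, Imap z (Imap z i) = i := by
  intro i
  by_cases hcr : Cr z i
  · rw [Imap_pos hcr]
    have hcr2 : Cr z (z i) := by
      obtain ⟨x, h1, h2, h3⟩ := top_of_cr hinv hcr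
      refine cr_of_top hinv h1 ?_ ?_
      · rw [hinv, min_comm]; exact h2
      · rw [hinv, max_comm]; exact h3
    rw [Imap_pos hcr2, hinv]
  · rw [Imap_neg hcr, Imap_neg hcr]

/-- using non-Grassmannian-ness: `I(z)` has a crossed top at most `q`. -/
lemma crossed_top_le_q {z : Equiv.Perm ℤ} {q r : ℤ} (hinv : ∀ i, z (z i) = i)
    (hfpf : ∀ i, z i ≠ i) (hqr : IsMaxVisInv z q r)
    (hfinS : {i : ℤ | z i ≠ Theta i}.Finite) (hg : ¬ IsFPFGrass z) :
    ∃ b, b ≤ q ∧ Imap z b < b := by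
  by_contra hcon
  push_neg at hcon
  have hTfin : {b : ℤ | Imap z b < b}.Finite := hfinS.subset (tops_subset hinv)
  apply hg
  by_cases hTne : {b : ℤ | Imap z b < b}.Nonempty
  · obtain ⟨β, hβ⟩ := exists_isLeast_int hTfin hTne
    have hβq : q + 1 ≤ β := by
      have h1 : Imap z β < β := hβ.1
      by_contra hcc
      push_neg at hcc
      have := hcon β (by omega)
      omega
    have hDmin : IsLeast {i : ℤ | VisDes (Imap z) i} (β - 1) := isLeast_visDes hβ
    have haU := aU_gen hinv hfpf (b2 hqr)
    have hexcl := excl hinv hfpf hqr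
    have hbound : ∀ i, VisDes (Imap z) i → q ≤ i ∧ i ≤ q + 1 := by
      intro i hi
      constructor
      · have := hDmin.2 hi; omega
      · by_contra hcc; push_neg at hcc
        exact haU i (by omega) hi
    rcases aE hinv hfpf hqr with hn | hn
    · obtain ⟨r', φ', hgr⟩ := grass_of_unique_descent (Imap z) (imap_invol hinv) hTfin hTne q hn
        (fun i hi => by
          have h2 := hbound i hi
          rcases (by omega : i = q ∨ i = q + 1) with h | h
          · exact h
          · exact absurd ⟨hn, h ▸ hi⟩ hexcl)
      exact Or.inr ⟨q, r', φ', hgr⟩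
    · obtain ⟨r', φ', hgr⟩ := grass_of_unique_descent (Imap z) (imap_invol hinv) hTfin hTne (q+1) hn
        (fun i hi => by
          have h2 := hbound i hi
          rcases (by omega : i = q ∨ i = q + 1) with h | h
          · exact absurd ⟨h ▸ hi, hn⟩ hexcl
          · exact h)
      exact Or.inr ⟨q+1, r', φ', hgr⟩
  · left
    funext i
    show Imap z i = i
    by_cases hcr : Cr z i
    · exfalso
      apply hTne
      rcases lt_trichotomy (z i) i with h | h | h
      · exact ⟨i, by rw [Set.mem_setOf_eq, imap_lt_iff]; exact ⟨h, hcr⟩⟩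
      · exact absurd h (hfpf i)
      · refine ⟨z i, ?_⟩
        rw [Set.mem_setOf_eq, imap_lt_iff]
        refine ⟨by rw [hinv]; exact h, ?_⟩
        obtain ⟨x, hx1, hx2, hx3⟩ := top_of_cr hinv hcr
        refine cr_of_top hinv hx1 ?_ ?_
        · rw [hinv, min_comm]; exact hx2
        · rw [hinv, max_comm]; exact hx3
    · exact Imap_neg hcr

/-- let `z ∈ F_ℤ` be not FPF-Grassmannian, let `(q,r)` be its
lexicographically maximal FPF-visible inversion, and let `y = η_FPF(z) = (q,r) z (q,r)`.
Then (a) the maximal visible descent of `I(z)` is `q` or `q+1`; (b) every visible descent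
of `I(y)` is at most `q`; (c) `I(y)` and `I(z)` have the same minimal visible descent,
which is at most `q - 1`. -/
theorem visDes_Imap_eta (z : Equiv.Perm ℤ) (hz : z ∈ FZ) (hg : ¬ IsFPFGrass z)
    (q r : ℤ) (hqr : IsMaxVisInv z q r)
    (y : Equiv.Perm ℤ) (hy : y = Equiv.swap q r * z * Equiv.swap q r) :
    (∃ d : ℤ, IsGreatest {i : ℤ | VisDes (Imap z) i} d ∧ (d = q ∨ d = q + 1)) ∧
    (∀ d : ℤ, VisDes (Imap y) d → d ≤ q) ∧
    (∃ j : ℤ, IsLeast {d : ℤ | VisDes (Imap y) d} j ∧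
      IsLeast {d : ℤ | VisDes (Imap z) d} j ∧ j ≤ q - 1) := by
  obtain ⟨hz1, hfpf, hfinS⟩ := hz
  have hinv : ∀ i, z (z i) = i := by
    intro i
    have h := Equiv.ext_iff.mp hz1 i
    rwa [Equiv.Perm.mul_apply, Equiv.Perm.one_apply] at h
  have haU := aU_gen hinv hfpf (b2 hqr)
  -- part (a)
  have parta : ∃ d : ℤ, IsGreatest {i : ℤ | VisDes (Imap z) i} d ∧ (d = q ∨ d = q + 1) := by
    by_cases hD : VisDes (Imap z) (q+1)
    · refine ⟨q+1, ⟨hD, ?_⟩, Or.inr rfl⟩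
      intro i hi
      by_contra hcc
      push_neg at hcc
      exact haU i (by omega) hi
    · rcases aE hinv hfpf hqr with h | h
      · refine ⟨q, ⟨h, ?_⟩, Or.inl rfl⟩
        intro i hi
        by_contra hcc
        push_neg at hcc
        rcases (by omega : i = q + 1 ∨ q + 2 ≤ i) with hh | hh
        · exact hD (hh ▸ hi)
        · exact haU i hh hi
      · exact absurd h hD
  -- part (c)
  obtain ⟨b0, hb0q, hb0⟩ := crossed_top_le_q hinv hfpf hqr hfinS hg
  have hTfin : {b : ℤ | Imap z b < b}.Finite := hfinS.subset (tops_subset hinv)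
  obtain ⟨β, hβ⟩ := exists_isLeast_int hTfin ⟨b0, hb0⟩
  have hβq : β ≤ q := le_trans (hβ.2 hb0) hb0q
  have hyinv := y_inv hy hinv
  have hTy : IsLeast {b : ℤ | Imap y b < b} β := by
    constructor
    · rw [Set.mem_setOf_eq, imap_lt_iff]
      have h1 : Imap z β < β := hβ.1
      rw [imap_lt_iff] at h1
      rcases eq_or_lt_of_le hβq with h | h
      · rw [h] at h1 ⊢
        exact ct_at_q hinv hfpf hqr hy h1
      · exact (ct_below hinv hfpf hqr hy β h).mp h1
    · intro x hx
      by_contra hcc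
      push_neg at hcc
      rw [Set.mem_setOf_eq, imap_lt_iff] at hx
      have hxq : x < q := by omega
      have h2 := (ct_below hinv hfpf hqr hy x hxq).mpr hx
      have h3 := hβ.2 (show x ∈ {b : ℤ | Imap z b < b} by
        rw [Set.mem_setOf_eq, imap_lt_iff]; exact h2)
      omega
  exact ⟨parta, partB hinv hfpf hqr hy,
    β - 1, isLeast_visDes hTy, isLeast_visDes hβ, by omega⟩
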